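/- Let Q be a quadri-algebra over a field F of characteristic zero and let X ⊆ Q. Then the quadri-subalgebra of Q generated by X (the smallest F-subspace of Q containing X and closed under ↘, ↗, ↖ and ↙) is spanned, as an F-vector space, by the evaluations in Q of normal tree monomials on X: planar binary trees whose leaves are labeled by elements of X, whose internal nodes are labeled by {↘, ↗, ↖, ↙}, and whose left-growth patterns (p, q) all satisfy p ≠ ↖, q ≠ ↘, and p ≠ q (so the allowed left-growth patterns are exactly (↙,↖), (↙,↗), (↗,↙), (↗,↖), (↘,↙), (↘,↖), (↘,↗)). -/
import Mathlib


/-- Operation labels `↘` (se), `↗` (ne), `↖` (nw), `↙` (sw). -/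
inductive QuadOp where
  | se
  | ne
  | nw
  | sw
deriving DecidableEq

/-- Planar (full) binary trees with internal nodes labeled by `QuadOp` and leaves
labeled by elements of `Q`. -/
inductive QTree (Q : Type*) where
  | leaf : Q → QTree Q
  | node : QuadOp → QTree Q → QTree Q → QTree Q

/-- Evaluation of a labeled tree in `Q` using the four operations. -/
def QTree.eval {Q : Type*} (fse fne fnw fsw : Q → Q → Q) : QTree Q → Q
  | .leaf x => x
  | .node QuadOp.se l r => fse (l.eval fse fne fnw fsw) (r.eval fse fne fnw fsw)
  | .node QuadOp.ne l r => fne (l.eval fse fne fnw fsw) (r.eval fse fne fnw fsw)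
  | .node QuadOp.nw l r => fnw (l.eval fse fne fnw fsw) (r.eval fse fne fnw fsw)
  | .node QuadOp.sw l r => fsw (l.eval fse fne fnw fsw) (r.eval fse fne fnw fsw)

/-- All leaf labels of the tree lie in `X`. -/
def QTree.leavesIn {Q : Type*} (X : Set Q) : QTree Q → Prop
  | .leaf x => x ∈ X
  | .node _ l r => l.leavesIn X ∧ r.leavesIn X

/-- Normality: every left-growth pattern `(p, q)` satisfies `p ≠ ↖`, `q ≠ ↘`, `p ≠ q`. -/
def QTree.normal {Q : Type*} : QTree Q → Prop
  | .leaf _ => True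
  | .node _ (.leaf _) r => r.normal
  | .node p (.node q a b) r =>
      p ≠ QuadOp.nw ∧ q ≠ QuadOp.se ∧ p ≠ q ∧
        (QTree.node q a b).normal ∧ r.normal

namespace QuadriAux

open Submodule

def pen : QuadOp → ℕ
  | .se => 2
  | .ne => 1
  | .sw => 1
  | .nw => 0

def good (p q : QuadOp) : Prop := p ≠ QuadOp.nw ∧ q ≠ QuadOp.se ∧ p ≠ q

def tsize {Q : Type*} : QTree Q → ℕ
  | .leaf _ => 1
  | .node _ l r => tsize l + tsize r

def rootL {Q : Type*} : QTree Q → Option QuadOp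
  | .leaf _ => none
  | .node o _ _ => some o

variable {F : Type*} [Field F] {Q : Type*} [AddCommGroup Q] [Module F Q]

variable (op : QuadOp → Q →ₗ[F] Q →ₗ[F] Q) (X : Set Q)

def evalT : QTree Q → Q
  | .leaf x => x
  | .node o l r => op o (evalT l) (evalT r)

def Sn (n : ℕ) : Submodule F Q :=
  Submodule.span F {a | ∃ t : QTree Q, t.leavesIn X ∧ t.normal ∧ tsize t ≤ n ∧ evalT op t = a}

inductive Sp (Q : Type*) where
  | base : Q → Sp Q
  | node : QuadOp → Sp Q → Q → ℕ → Sp Q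

def gval : Sp Q → Q
  | .base x => x
  | .node q g w _ => op q (gval g) w

def gsize {Q : Type*} : Sp Q → ℕ
  | .base _ => 1
  | .node _ g _ m => gsize g + m

def glen {Q : Type*} : Sp Q → ℕ
  | .base _ => 0
  | .node _ g _ _ => glen g + 1

def gpen {Q : Type*} : Sp Q → ℕ
  | .base _ => 0
  | .node q g _ _ => pen q + gpen g

def headL {Q : Type*} : Sp Q → Option QuadOp
  | .base _ => none
  | .node q _ _ _ => some q

def gvalid : Sp Q → Prop
  | .base x => x ∈ X
  | .node _ g w m => gvalid g ∧ w ∈ Sn op X m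

def gallGood {Q : Type*} : Sp Q → Prop
  | .base _ => True
  | .node q g _ _ => (∀ r, headL g = some r → good q r) ∧ gallGood g

def ofTree : QTree Q → Sp Q
  | .leaf x => .base x
  | .node q l r => .node q (ofTree l) (evalT op r) (tsize r)

lemma one_le_gsize (g : Sp Q) : 1 ≤ gsize g := by
  induction g with
  | base x => simp [gsize]
  | node q g w m ih => simp only [gsize]; omega

lemma Sn_mono {m n : ℕ} (h : m ≤ n) : Sn op X m ≤ Sn op X n :=
  Submodule.span_mono (fun a ⟨t, h1, h2, h3, h4⟩ => ⟨t, h1, h2, h3.trans h, h4⟩)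

lemma evalT_mem_Sn {t : QTree Q} (hn : t.normal) (hX : t.leavesIn X) :
    evalT op t ∈ Sn op X (tsize t) :=
  Submodule.subset_span ⟨t, hX, hn, le_rfl, rfl⟩

lemma normal_node {q : QuadOp} {l r : QTree Q} (h : (QTree.node q l r).normal) :
    l.normal ∧ r.normal := by
  cases l with
  | leaf x => exact ⟨trivial, h⟩
  | node q' a b => exact ⟨h.2.2.2.1, h.2.2.2.2⟩

lemma gval_ofTree (t : QTree Q) : gval op (ofTree op t) = evalT op t := by
  induction t with
  | leaf x => rfl
  | node q l r ihl ihr => simp [ofTree, gval, evalT, ihl]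

lemma gsize_ofTree (t : QTree Q) : gsize (ofTree op t) = tsize t := by
  induction t with
  | leaf x => rfl
  | node q l r ihl ihr => simp [ofTree, gsize, tsize, ihl]

lemma gvalid_ofTree {t : QTree Q} (hn : t.normal) (hX : t.leavesIn X) :
    gvalid op X (ofTree op t) := by
  induction t with
  | leaf x => exact hX
  | node q l r ihl ihr =>
    exact ⟨ihl (normal_node hn).1 hX.1, evalT_mem_Sn op X (normal_node hn).2 hX.2⟩

lemma lin_mem (f : Q →ₗ[F] Q) {s : Set Q} {M : Submodule F Q} (h : ∀ a ∈ s, f a ∈ M) :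
    ∀ u ∈ Submodule.span F s, f u ∈ M := by
  intro u hu
  induction hu using Submodule.span_induction with
  | mem a ha => exact h a ha
  | zero => rw [map_zero]; exact M.zero_mem
  | add a b _ _ ha hb => rw [map_add]; exact M.add_mem ha hb
  | smul c a _ ha => rw [map_smul]; exact M.smul_mem c ha

lemma bilin_mem (B : Q →ₗ[F] Q →ₗ[F] Q) {s t : Set Q} {M : Submodule F Q}
    (h : ∀ a ∈ s, ∀ b ∈ t, B a b ∈ M) :
    ∀ u ∈ Submodule.span F s, ∀ v ∈ Submodule.span F t, B u v ∈ M := by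
  intro u hu v hv
  have h1 : ∀ a ∈ s, B a v ∈ M := fun a ha => lin_mem (B a) (h a ha) v hv
  have h2 := lin_mem (B.flip v) (fun a ha => h1 a ha) u hu
  simpa using h2


lemma allGoodLem : ∀ g : Sp Q, gvalid op X g → gallGood g →
    gval op g ∈ Submodule.span F
      {a | ∃ t : QTree Q, t.leavesIn X ∧ t.normal ∧ tsize t ≤ gsize g ∧
        rootL t = headL g ∧ evalT op t = a} := by
  intro g
  induction g with
  | base x =>
    intro hv _
    exact Submodule.subset_span ⟨.leaf x, hv, trivial, le_rfl, rfl, rfl⟩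
  | node q g' w m ih =>
    intro hv hg
    have hrec := ih hv.1 hg.2
    have hgood := hg.1
    refine bilin_mem (op q) ?_ _ hrec w hv.2
    rintro a ⟨t', hX', hn', hs', hr', rfl⟩ b ⟨d, hXd, hnd, hsd, rfl⟩
    refine Submodule.subset_span ⟨.node q t' d, ⟨hX', hXd⟩, ?_, ?_, rfl, rfl⟩
    · cases t' with
      | leaf x => exact hnd
      | node r' a b =>
        have hh : headL g' = some r' := by rw [← hr']; rfl
        obtain ⟨g1, g2, g3⟩ := hgood r' hh
        exact ⟨g1, g2, g3, hn', hnd⟩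
    · simp only [tsize, gsize]; omega


lemma rewriteLem
    (h1 : ∀ x y z : Q, op .nw (op .nw x y) z =
      op .nw x (op .se y z + op .ne y z + op .nw y z + op .sw y z))
    (h2 : ∀ x y z : Q, op .nw (op .ne x y) z = op .ne x (op .nw y z + op .sw y z))
    (h3 : ∀ x y z : Q, op .ne (op .ne x y + op .nw x y) z = op .ne x (op .ne y z + op .se y z))
    (h4 : ∀ x y z : Q, op .nw (op .sw x y) z = op .sw x (op .ne y z + op .nw y z))
    (h5 : ∀ x y z : Q, op .nw (op .se x y) z = op .se x (op .nw y z))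
    (h6 : ∀ x y z : Q, op .ne (op .se x y + op .sw x y) z = op .se x (op .ne y z))
    (h7 : ∀ x y z : Q, op .sw (op .nw x y + op .sw x y) z = op .sw x (op .se y z + op .sw y z))
    (h8 : ∀ x y z : Q, op .sw (op .ne x y + op .se x y) z = op .se x (op .sw y z))
    (h9 : ∀ x y z : Q, op .se (op .se x y + op .ne x y + op .nw x y + op .sw x y) z =
      op .se x (op .se y z)) :
    ∀ g : Sp Q, gvalid op X g → ¬ gallGood g →
    (∀ h : Sp Q, gvalid op X h → gsize h < gsize g → gval op h ∈ Sn op X (gsize h)) →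
    gval op g ∈ Submodule.span F
      {v | ∃ h : Sp Q, gvalid op X h ∧ gsize h ≤ gsize g ∧
        (glen h < glen g ∨ (glen h ≤ glen g ∧ gpen h < gpen g)) ∧ gval op h = v} := by
  intro g
  induction g with
  | base x => intro _ hbad _; exact absurd trivial hbad
  | node q g' w m ih =>
    intro hv hbad Hsmall
    obtain ⟨hvg', hw⟩ := hv
    cases g' with
    | base x =>
      exact absurd ⟨fun r hr => by simp [headL] at hr, trivial⟩ hbad
    | node r g'' w'' m'' =>
      obtain ⟨hvg'', hw''⟩ := hvg'
      by_cases hqr : good q r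
      · -- the top pattern is fine; recurse into the left factor
        have hbad' : ¬ gallGood (Sp.node r g'' w'' m'') := by
          intro hgg
          refine hbad ⟨fun r' hr' => ?_, hgg⟩
          simp only [headL, Option.some.injEq] at hr'
          exact hr' ▸ hqr
        have Hsmall' : ∀ h : Sp Q, gvalid op X h →
            gsize h < gsize (Sp.node r g'' w'' m'') → gval op h ∈ Sn op X (gsize h) := by
          intro h a b
          exact Hsmall h a (by simp only [gsize] at b ⊢; omega)
        have hrec := ih ⟨hvg'', hw''⟩ hbad' Hsmall'
        rw [show gval op (Sp.node q (Sp.node r g'' w'' m'') w m) =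
            (op q).flip w (gval op (Sp.node r g'' w'' m'')) by simp [gval]]
        refine lin_mem ((op q).flip w) ?_ _ hrec
        rintro a ⟨h', hvh', hsh', hlexh', rfl⟩
        simp only [LinearMap.flip_apply]
        refine Submodule.subset_span ⟨Sp.node q h' w m, ⟨hvh', hw⟩, ?_, ?_, rfl⟩
        · simp only [gsize] at hsh' ⊢; omega
        · rcases hlexh' with hl | ⟨hl1, hl2⟩
          · left; simp only [glen] at hl ⊢; omega
          · right
            refine ⟨?_, ?_⟩
            · simp only [glen] at hl1 ⊢; omega
            · simp only [gpen] at hl2 ⊢; omega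
      · -- bad pattern at the top: rewrite with the quadri-algebra axioms
        have hWgen : ∀ o : QuadOp, op o w'' w ∈ Sn op X (m'' + m) := by
          intro o
          refine bilin_mem (op o) ?_ _ hw'' _ hw
          rintro a ⟨d'', hXd, hnd, hsd, rfl⟩ b ⟨d, hXd2, hnd2, hsd2, rfl⟩
          have hkey := Hsmall (Sp.node o (ofTree op d'') (evalT op d) (tsize d))
            ⟨gvalid_ofTree op X hnd hXd, evalT_mem_Sn op X hnd2 hXd2⟩
            (by simp only [gsize, gsize_ofTree]
                have := one_le_gsize g''
                omega)
          rw [show gval op (Sp.node o (ofTree op d'') (evalT op d) (tsize d)) =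
              op o (evalT op d'') (evalT op d) by simp [gval, gval_ofTree]] at hkey
          refine Sn_mono op X ?_ hkey
          simp only [gsize, gsize_ofTree]; omega
        have hmain : ∀ (a1 : QuadOp) (W : Q), W ∈ Sn op X (m'' + m) →
            op a1 (gval op g'') W ∈ Submodule.span F
              {v | ∃ h : Sp Q, gvalid op X h ∧
                gsize h ≤ gsize (Sp.node q (Sp.node r g'' w'' m'') w m) ∧
                (glen h < glen (Sp.node q (Sp.node r g'' w'' m'') w m) ∨
                  (glen h ≤ glen (Sp.node q (Sp.node r g'' w'' m'') w m) ∧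
                    gpen h < gpen (Sp.node q (Sp.node r g'' w'' m'') w m))) ∧
                gval op h = v} := by
          intro a1 W hW
          refine Submodule.subset_span ⟨Sp.node a1 g'' W (m'' + m), ⟨hvg'', hW⟩, ?_, ?_, rfl⟩
          · simp only [gsize]; omega
          · left; simp only [glen]; omega
        have hcorr : ∀ c : QuadOp, pen c < pen r →
            op q (op c (gval op g'') w'') w ∈ Submodule.span F
              {v | ∃ h : Sp Q, gvalid op X h ∧
                gsize h ≤ gsize (Sp.node q (Sp.node r g'' w'' m'') w m) ∧
                (glen h < glen (Sp.node q (Sp.node r g'' w'' m'') w m) ∨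
                  (glen h ≤ glen (Sp.node q (Sp.node r g'' w'' m'') w m) ∧
                    gpen h < gpen (Sp.node q (Sp.node r g'' w'' m'') w m))) ∧
                gval op h = v} := by
          intro c hc
          refine Submodule.subset_span
            ⟨Sp.node q (Sp.node c g'' w'' m'') w m, ⟨⟨hvg'', hw''⟩, hw⟩, ?_, ?_, rfl⟩
          · simp only [gsize]; omega
          · right
            refine ⟨le_rfl, ?_⟩
            simp only [gpen]; omega
        simp only [gval]
        cases q <;> cases r <;>
          try exact absurd ⟨by decide, by decide, by decide⟩ hqr
        -- 9 bad patterns remain, in order: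
        -- (se,se), (ne,se), (ne,ne), (nw,se), (nw,ne), (nw,nw), (nw,sw), (sw,se), (sw,sw)
        · -- (se, se)
          have e : op .se (op .se (gval op g'') w'') w =
              op .se (gval op g'') (op .se w'' w) - op .se (op .ne (gval op g'') w'') w -
                op .se (op .nw (gval op g'') w'') w - op .se (op .sw (gval op g'') w'') w := by
            have h := h9 (gval op g'') w'' w
            simp only [map_add, LinearMap.add_apply] at h ⊢
            rw [← h]; abel
          rw [e]
          exact sub_mem (sub_mem (sub_mem (hmain .se _ (hWgen .se)) (hcorr .ne (by decide)))
            (hcorr .nw (by decide))) (hcorr .sw (by decide))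
        · -- (ne, se)
          have e : op .ne (op .se (gval op g'') w'') w =
              op .se (gval op g'') (op .ne w'' w) - op .ne (op .sw (gval op g'') w'') w := by
            have h := h6 (gval op g'') w'' w
            simp only [map_add, LinearMap.add_apply] at h ⊢
            rw [← h]; abel
          rw [e]
          exact sub_mem (hmain .se _ (hWgen .ne)) (hcorr .sw (by decide))
        · -- (ne, ne)
          have e : op .ne (op .ne (gval op g'') w'') w =
              op .ne (gval op g'') (op .ne w'' w + op .se w'' w) -
                op .ne (op .nw (gval op g'') w'') w := by
            have h := h3 (gval op g'') w'' w
            simp only [map_add, LinearMap.add_apply] at h ⊢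
            rw [← h]; abel
          rw [e]
          exact sub_mem (hmain .ne _ (add_mem (hWgen .ne) (hWgen .se))) (hcorr .nw (by decide))
        · -- (nw, se)
          rw [h5 (gval op g'') w'' w]
          exact hmain .se _ (hWgen .nw)
        · -- (nw, ne)
          rw [h2 (gval op g'') w'' w]
          exact hmain .ne _ (add_mem (hWgen .nw) (hWgen .sw))
        · -- (nw, nw)
          rw [h1 (gval op g'') w'' w]
          exact hmain .nw _ (add_mem (add_mem (add_mem (hWgen .se) (hWgen .ne)) (hWgen .nw))
            (hWgen .sw))
        · -- (nw, sw)
          rw [h4 (gval op g'') w'' w]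
          exact hmain .sw _ (add_mem (hWgen .ne) (hWgen .nw))
        · -- (sw, se)
          have e : op .sw (op .se (gval op g'') w'') w =
              op .se (gval op g'') (op .sw w'' w) - op .sw (op .ne (gval op g'') w'') w := by
            have h := h8 (gval op g'') w'' w
            simp only [map_add, LinearMap.add_apply] at h ⊢
            rw [← h]; abel
          rw [e]
          exact sub_mem (hmain .se _ (hWgen .sw)) (hcorr .ne (by decide))
        · -- (sw, sw)
          have e : op .sw (op .sw (gval op g'') w'') w =
              op .sw (gval op g'') (op .se w'' w + op .sw w'' w) -
                op .sw (op .nw (gval op g'') w'') w := by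
            have h := h7 (gval op g'') w'' w
            simp only [map_add, LinearMap.add_apply] at h ⊢
            rw [← h]; abel
          rw [e]
          exact sub_mem (hmain .sw _ (add_mem (hWgen .se) (hWgen .sw))) (hcorr .nw (by decide))


lemma keyLem
    (h1 : ∀ x y z : Q, op .nw (op .nw x y) z =
      op .nw x (op .se y z + op .ne y z + op .nw y z + op .sw y z))
    (h2 : ∀ x y z : Q, op .nw (op .ne x y) z = op .ne x (op .nw y z + op .sw y z))
    (h3 : ∀ x y z : Q, op .ne (op .ne x y + op .nw x y) z = op .ne x (op .ne y z + op .se y z))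
    (h4 : ∀ x y z : Q, op .nw (op .sw x y) z = op .sw x (op .ne y z + op .nw y z))
    (h5 : ∀ x y z : Q, op .nw (op .se x y) z = op .se x (op .nw y z))
    (h6 : ∀ x y z : Q, op .ne (op .se x y + op .sw x y) z = op .se x (op .ne y z))
    (h7 : ∀ x y z : Q, op .sw (op .nw x y + op .sw x y) z = op .sw x (op .se y z + op .sw y z))
    (h8 : ∀ x y z : Q, op .sw (op .ne x y + op .se x y) z = op .se x (op .sw y z))
    (h9 : ∀ x y z : Q, op .se (op .se x y + op .ne x y + op .nw x y + op .sw x y) z =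
      op .se x (op .se y z)) :
    ∀ (N L P : ℕ) (g : Sp Q), gvalid op X g → gsize g ≤ N → glen g ≤ L → gpen g ≤ P →
      gval op g ∈ Sn op X (gsize g) := by
  intro N
  induction N using Nat.strong_induction_on with
  | _ N ihn =>
  intro L
  induction L using Nat.strong_induction_on with
  | _ L ihl =>
  intro P
  induction P using Nat.strong_induction_on with
  | _ P ihp =>
  intro g hv hN hL hP
  by_cases hg : gallGood g
  · refine Submodule.span_le.2 ?_ (allGoodLem op X g hv hg)
    rintro a ⟨t, p1, p2, p3, _, p5⟩
    exact Submodule.subset_span ⟨t, p1, p2, p3, p5⟩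
  · have Hsmall : ∀ h : Sp Q, gvalid op X h → gsize h < gsize g →
        gval op h ∈ Sn op X (gsize h) := by
      intro h hh hlt
      exact ihn (gsize h) (hlt.trans_le hN) (glen h) (gpen h) h hh le_rfl le_rfl le_rfl
    have hr := rewriteLem op X h1 h2 h3 h4 h5 h6 h7 h8 h9 g hv hg Hsmall
    refine Submodule.span_le.2 ?_ hr
    rintro a ⟨h, hh, hs, hlex, rfl⟩
    have hmem : gval op h ∈ Sn op X (gsize h) := by
      rcases hlex with hlen | ⟨hlen, hpen⟩
      · exact ihl (glen h) (hlen.trans_le hL) (gpen h) h hh (hs.trans hN) le_rfl le_rfl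
      · exact ihp (gpen h) (hpen.trans_le hP) h hh (hs.trans hN) (hlen.trans hL) le_rfl
    exact Sn_mono op X hs hmem

end QuadriAux

section Main

open QuadriAux

variable {F : Type*} [Field F] {Q : Type*} [AddCommGroup Q] [Module F Q]

def opF (se ne nw sw : Q →ₗ[F] Q →ₗ[F] Q) : QuadOp → Q →ₗ[F] Q →ₗ[F] Q
  | .se => se
  | .ne => ne
  | .nw => nw
  | .sw => sw

lemma evalT_eq (se ne nw sw : Q →ₗ[F] Q →ₗ[F] Q) (t : QTree Q) :
    evalT (opF se ne nw sw) t =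
      t.eval (fun u v => se u v) (fun u v => ne u v) (fun u v => nw u v) (fun u v => sw u v) := by
  induction t with
  | leaf x => rfl
  | node o l r ihl ihr => cases o <;> simp [evalT, QTree.eval, opF, ihl, ihr]

end Main

open QuadriAux

/-- in a quadri-algebra `Q` (ops `se = ↘`, `ne = ↗`, `nw = ↖`, `sw = ↙`)
over a field of characteristic zero, the quadri-subalgebra generated by `X ⊆ Q` (the
smallest subspace containing `X` and closed under the four operations) is spanned by
the evaluations of normal tree monomials on `X`. -/
theorem quadri_subalgebra_spanned_by_normal_monomials
    (F : Type*) [Field F] [CharZero F]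
    (Q : Type*) [AddCommGroup Q] [Module F Q]
    (se ne nw sw : Q →ₗ[F] Q →ₗ[F] Q)
    (q1 : ∀ x y z : Q, nw (nw x y) z = nw x (se y z + ne y z + nw y z + sw y z))
    (q2 : ∀ x y z : Q, nw (ne x y) z = ne x (nw y z + sw y z))
    (q3 : ∀ x y z : Q, ne (ne x y + nw x y) z = ne x (ne y z + se y z))
    (q4 : ∀ x y z : Q, nw (sw x y) z = sw x (ne y z + nw y z))
    (q5 : ∀ x y z : Q, nw (se x y) z = se x (nw y z))
    (q6 : ∀ x y z : Q, ne (se x y + sw x y) z = se x (ne y z))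
    (q7 : ∀ x y z : Q, sw (nw x y + sw x y) z = sw x (se y z + sw y z))
    (q8 : ∀ x y z : Q, sw (ne x y + se x y) z = se x (sw y z))
    (q9 : ∀ x y z : Q, se (se x y + ne x y + nw x y + sw x y) z = se x (se y z))
    (X : Set Q) :
    sInf {p : Submodule F Q |
        X ⊆ p ∧ ∀ a ∈ p, ∀ b ∈ p,
          se a b ∈ p ∧ ne a b ∈ p ∧ nw a b ∈ p ∧ sw a b ∈ p} =
      Submodule.span F
        {a : Q | ∃ t : QTree Q, t.leavesIn X ∧ t.normal ∧
          t.eval (fun u v => se u v) (fun u v => ne u v)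
            (fun u v => nw u v) (fun u v => sw u v) = a} := by
  classical
  simp only [← evalT_eq se ne nw sw]
  refine le_antisymm (sInf_le ⟨?_, ?_⟩) (le_sInf ?_)
  · intro x hx
    exact Submodule.subset_span ⟨.leaf x, hx, trivial, rfl⟩
  · intro a ha b hb
    have key : ∀ o' : QuadOp, opF se ne nw sw o' a b ∈ Submodule.span F
        {a : Q | ∃ t : QTree Q, t.leavesIn X ∧ t.normal ∧ evalT (opF se ne nw sw) t = a} := by
      intro o'
      refine bilin_mem (opF se ne nw sw o') ?_ a ha b hb
      rintro u ⟨t, hXt, hnt, rfl⟩ v ⟨s, hXs, hns, rfl⟩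
      have hg : gvalid (opF se ne nw sw) X
          (Sp.node o' (ofTree (opF se ne nw sw) t) (evalT (opF se ne nw sw) s) (tsize s)) :=
        ⟨gvalid_ofTree _ _ hnt hXt, evalT_mem_Sn _ _ hns hXs⟩
      have hk := keyLem (opF se ne nw sw) X q1 q2 q3 q4 q5 q6 q7 q8 q9 _ _ _ _
        hg le_rfl le_rfl le_rfl
      rw [show gval (opF se ne nw sw)
            (Sp.node o' (ofTree (opF se ne nw sw) t) (evalT (opF se ne nw sw) s) (tsize s)) =
          opF se ne nw sw o' (evalT (opF se ne nw sw) t) (evalT (opF se ne nw sw) s) by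
        simp [gval, gval_ofTree]] at hk
      refine Submodule.span_mono ?_ hk
      rintro x ⟨t', u1, u2, _, u4⟩
      exact ⟨t', u1, u2, u4⟩
    exact ⟨key .se, key .ne, key .nw, key .sw⟩
  · rintro p ⟨hXp, hcl⟩
    refine Submodule.span_le.2 ?_
    rintro a ⟨t, hXt, _, rfl⟩
    have hall : ∀ t0 : QTree Q, t0.leavesIn X → evalT (opF se ne nw sw) t0 ∈ p := by
      intro t0
      induction t0 with
      | leaf x => intro hx; exact hXp hx
      | node o' l r ihl ihr =>
        intro hx
        have h4 := hcl _ (ihl hx.1) _ (ihr hx.2)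
        cases o' with
        | se => exact h4.1
        | ne => exact h4.2.1
        | nw => exact h4.2.2.1
        | sw => exact h4.2.2.2
    exact hall t hXt
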